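/- (Cauchy–Goursat for strict harmonic forms) If w = u + v·dxdy is strict harmonic (satisfies the Cauchy–Riemann equations, with u, v continuously differentiable) on a simply connected open set Ω ⊆ ℝ², then the valuation of w on every closed C¹ curve in Ω vanishes: ⟨w⟩_c = 0. -/

import Mathlib

open Complex intervalIntegral

/-- partial derivative in the `x`-direction -/
noncomputable def px (f : ℝ × ℝ → ℝ) (p : ℝ × ℝ) : ℝ := fderiv ℝ f p (1, 0)

/-- partial derivative in the `y`-direction -/
noncomputable def py (f : ℝ × ℝ → ℝ) (p : ℝ × ℝ) : ℝ := fderiv ℝ f p (0, 1)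

/-- The valuation `⟨w⟩_c` of the even form `w = u + v·dxdy` on a curve `c`,
identified with a complex number via `dxdy ↔ i`:
`⟨w⟩_c = ∫_c (u dx − v dy) + i ∫_c (u dy + v dx)`. -/
noncomputable def valuation (u v : ℝ × ℝ → ℝ) (c : ℝ → ℝ × ℝ) : ℂ :=
  ((∫ t in (0:ℝ)..1, (u (c t) * (deriv c t).1 - v (c t) * (deriv c t).2)) : ℝ) +
    ((∫ t in (0:ℝ)..1, (u (c t) * (deriv c t).2 + v (c t) * (deriv c t).1)) : ℝ) * Complex.I

section CauchyGoursatAux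
open Complex Set Metric intervalIntegral
set_option maxHeartbeats 1000000

lemma CR_holo {Ω : Set (ℝ × ℝ)} (hΩ : IsOpen Ω)
    {u v : ℝ × ℝ → ℝ} (hu : ContDiffOn ℝ 1 u Ω) (hv : ContDiffOn ℝ 1 v Ω)
    (hCR : ∀ p ∈ Ω, px u p = py v p ∧ py u p = -px v p)
    {z : ℂ} (hz : (z.re, z.im) ∈ Ω) :
    HasDerivAt (fun w : ℂ => (u (w.re, w.im) : ℂ) + v (w.re, w.im) * I)
      ((px u (z.re, z.im) : ℂ) + px v (z.re, z.im) * I) z := by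
  set p : ℝ × ℝ := (z.re, z.im) with hp
  have hun : DifferentiableAt ℝ u p :=
    (hu.contDiffAt (hΩ.mem_nhds hz)).differentiableAt one_ne_zero
  have hvn : DifferentiableAt ℝ v p :=
    (hv.contDiffAt (hΩ.mem_nhds hz)).differentiableAt one_ne_zero
  set Du := fderiv ℝ u p with hDudef
  set Dv := fderiv ℝ v p with hDvdef
  set g : ℂ →L[ℝ] ℝ × ℝ := equivRealProdCLM.toContinuousLinearMap with hgdef
  set L : ℂ →L[ℝ] ℂ := (ofRealCLM.comp (Du.comp g)) + I • (ofRealCLM.comp (Dv.comp g)) with hLdef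
  have hcomp : HasFDerivAt (fun w : ℂ => (u (w.re, w.im) : ℂ) + v (w.re, w.im) * I) L z := by
    have h1 : HasFDerivAt (fun w : ℂ => (u (w.re, w.im) : ℂ))
        (ofRealCLM.comp (Du.comp g)) z :=
      ofRealCLM.hasFDerivAt.comp z (hun.hasFDerivAt.comp z (g.hasFDerivAt))
    have h2 : HasFDerivAt (fun w : ℂ => (v (w.re, w.im) : ℂ))
        (ofRealCLM.comp (Dv.comp g)) z :=
      ofRealCLM.hasFDerivAt.comp z (hvn.hasFDerivAt.comp z (g.hasFDerivAt))
    have heq : (fun w : ℂ => (u (w.re, w.im) : ℂ) + v (w.re, w.im) * I)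
        = (fun w : ℂ => (u (w.re, w.im) : ℂ) + I * v (w.re, w.im)) := by
      funext w; ring
    rw [heq]
    exact h1.add (h2.const_mul I)
  set d : ℂ := (px u p : ℂ) + px v p * I with hddef
  have key : HasFDerivAt (fun w : ℂ => (u (w.re, w.im) : ℂ) + v (w.re, w.im) * I)
      (ContinuousLinearMap.smulRight (1 : ℂ →L[ℂ] ℂ) d) z := by
    apply hasFDerivAt_of_restrictScalars (𝕜 := ℝ) hcomp
    ext w
    have hw : ((w.re, w.im) : ℝ × ℝ) = w.re • ((1:ℝ),(0:ℝ)) + w.im • ((0:ℝ),(1:ℝ)) := by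
      simp [Prod.ext_iff]
    have hDu : Du (w.re, w.im) = w.re * Du (1,0) + w.im * Du (0,1) := by
      rw [hw, map_add, map_smul, map_smul]; simp [smul_eq_mul]
    have hDv : Dv (w.re, w.im) = w.re * Dv (1,0) + w.im * Dv (0,1) := by
      rw [hw, map_add, map_smul, map_smul]; simp [smul_eq_mul]
    obtain ⟨h1, h2⟩ := hCR p hz
    have e1 : Du (0,1) = - Dv (1,0) := h2
    have e2 : Dv (0,1) = Du (1,0) := h1.symm
    have hgw : g w = (w.re, w.im) := rfl
    simp only [ContinuousLinearMap.coe_restrictScalars', ContinuousLinearMap.smulRight_apply,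
      ContinuousLinearMap.one_apply, hLdef, ContinuousLinearMap.add_apply,
      ContinuousLinearMap.smul_apply, ContinuousLinearMap.coe_comp', Function.comp_apply,
      ofRealCLM_apply, hgw, hDu, hDv, e1, e2, hddef, smul_eq_mul]
    have : px u p = Du (1,0) := rfl
    rw [this]
    have : px v p = Dv (1,0) := rfl
    rw [this]
    apply Complex.ext <;> simp <;> ring
  simpa using key.hasDerivAt


lemma sq_le_of_mem_uIcc {a b c x : ℝ} (h : x ∈ Set.uIcc a b) :
    (x - c)^2 ≤ max ((a-c)^2) ((b-c)^2) := by
  rcases le_total a b with hab | hab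
  · rw [Set.uIcc_of_le hab] at h
    rcases le_total x c with h3 | h3
    · exact le_max_of_le_left (by nlinarith [h.1, h.2])
    · exact le_max_of_le_right (by nlinarith [h.1, h.2])
  · rw [Set.uIcc_of_ge hab] at h
    rcases le_total x c with h3 | h3
    · exact le_max_of_le_right (by nlinarith [h.1, h.2])
    · exact le_max_of_le_left (by nlinarith [h.1, h.2])

lemma rect_subset_ball {p : ℂ} {x1 x2 y1 y2 : ℝ} {δ : ℝ} (hδ : 0 < δ)
    (h : max ((x1-p.re)^2) ((x2-p.re)^2) + max ((y1-p.im)^2) ((y2-p.im)^2) < δ^2) :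
    Set.uIcc x1 x2 ×ℂ Set.uIcc y1 y2 ⊆ Metric.ball p δ := by
  intro z hz
  rw [Complex.mem_reProdIm] at hz
  have h1 := sq_le_of_mem_uIcc (c := p.re) hz.1
  have h2 := sq_le_of_mem_uIcc (c := p.im) hz.2
  rw [Metric.mem_ball, Complex.dist_eq_re_im]
  rw [show δ = Real.sqrt (δ^2) by rw [Real.sqrt_sq hδ.le]]
  apply Real.sqrt_lt_sqrt (by positivity)
  linarith

lemma integrable_horiz {f : ℂ → ℂ} {s : Set ℂ} (hcont : ContinuousOn f s) {y a b : ℝ}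
    (h : ∀ x ∈ Set.uIcc a b, (x:ℂ) + y*I ∈ s) :
    IntervalIntegrable (fun x : ℝ => f ((x:ℂ) + y*I)) MeasureTheory.volume a b :=
  (hcont.comp (Continuous.continuousOn (by continuity)) h).intervalIntegrable

lemma integrable_vert {f : ℂ → ℂ} {s : Set ℂ} (hcont : ContinuousOn f s) {x a b : ℝ}
    (h : ∀ y ∈ Set.uIcc a b, (x:ℂ) + y*I ∈ s) :
    IntervalIntegrable (fun y : ℝ => f ((x:ℂ) + y*I)) MeasureTheory.volume a b :=
  (hcont.comp (Continuous.continuousOn (by continuity)) h).intervalIntegrable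

lemma horiz_mem_rect {x1 x2 y : ℝ} (x : ℝ) (hx : x ∈ Set.uIcc x1 x2) :
    (x:ℂ) + y*I ∈ Set.uIcc x1 x2 ×ℂ Set.uIcc y y := by
  rw [Complex.mem_reProdIm]
  constructor <;> simp [hx]

lemma vert_mem_rect {x y1 y2 : ℝ} (y : ℝ) (hy : y ∈ Set.uIcc y1 y2) :
    (x:ℂ) + y*I ∈ Set.uIcc x x ×ℂ Set.uIcc y1 y2 := by
  rw [Complex.mem_reProdIm]
  constructor <;> simp [hy]

lemma mem_ball_seg_horiz {p : ℂ} {δ : ℝ} {x1 x2 y : ℝ}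
    (h1 : (x1:ℂ) + y*I ∈ Metric.ball p δ) (h2 : (x2:ℂ) + y*I ∈ Metric.ball p δ) :
    ∀ x ∈ Set.uIcc x1 x2, (x:ℂ) + y*I ∈ Metric.ball p δ := by
  intro x hx
  rw [← segment_eq_uIcc] at hx
  obtain ⟨a, b, ha, hb, hab, rfl⟩ := hx
  have : ((a • x1 + b • x2 : ℝ) : ℂ) + y*I = a • ((x1:ℂ) + y*I) + b • ((x2:ℂ) + y*I) := by
    have habC : (a:ℂ) + (b:ℂ) = 1 := by exact_mod_cast congrArg Complex.ofReal hab
    push_cast [smul_eq_mul, Complex.real_smul]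
    linear_combination (-(↑y * I)) * habC
  rw [this]
  exact (convex_ball p δ) h1 h2 ha hb hab

lemma mem_ball_seg_vert {p : ℂ} {δ : ℝ} {x y1 y2 : ℝ}
    (h1 : (x:ℂ) + y1*I ∈ Metric.ball p δ) (h2 : (x:ℂ) + y2*I ∈ Metric.ball p δ) :
    ∀ y ∈ Set.uIcc y1 y2, (x:ℂ) + y*I ∈ Metric.ball p δ := by
  intro y hy
  rw [← segment_eq_uIcc] at hy
  obtain ⟨a, b, ha, hb, hab, rfl⟩ := hy
  have : (x:ℂ) + ((a • y1 + b • y2 : ℝ) : ℂ)*I = a • ((x:ℂ) + y1*I) + b • ((x:ℂ) + y2*I) := by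
    have habC : (a:ℂ) + (b:ℂ) = 1 := by exact_mod_cast congrArg Complex.ofReal hab
    push_cast [smul_eq_mul, Complex.real_smul]
    linear_combination (-(↑x:ℂ)) * habC
  rw [this]
  exact (convex_ball p δ) h1 h2 ha hb hab

noncomputable def prim (f : ℂ → ℂ) (p w : ℂ) : ℂ :=
  (∫ x in p.re..w.re, f (x + p.im*I)) + I • ∫ y in p.im..w.im, f (w.re + y*I)

lemma prim_sub {f : ℂ → ℂ} {p : ℂ} {δ : ℝ}
    (hf : DifferentiableOn ℂ f (Metric.ball p δ)) {w w' : ℂ}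
    (hw : w ∈ Metric.ball p δ) (hw' : w' ∈ Metric.ball p δ)
    (hR : Set.uIcc w.re w'.re ×ℂ Set.uIcc p.im w'.im ⊆ Metric.ball p δ) :
    prim f p w' - prim f p w =
      (∫ x in w.re..w'.re, f (x + w'.im*I)) + I • ∫ y in w.im..w'.im, f ((w.re:ℂ) + y*I) := by
  have hcont : ContinuousOn f (Metric.ball p δ) := hf.continuousOn
  have hwe : (w.re:ℂ) + w.im*I ∈ Metric.ball p δ := by rwa [Complex.re_add_im]
  have hw'e : (w'.re:ℂ) + w'.im*I ∈ Metric.ball p δ := by rwa [Complex.re_add_im]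
  have hpe : (p.re:ℂ) + p.im*I ∈ Metric.ball p δ := by
    rw [Complex.re_add_im]; exact Metric.mem_ball_self (Metric.pos_of_mem_ball hw)
  have cornerA : (w.re:ℂ) + p.im*I ∈ Metric.ball p δ :=
    hR (by rw [Complex.mem_reProdIm]; constructor <;> simp [Set.left_mem_uIcc])
  have cornerB : (w'.re:ℂ) + p.im*I ∈ Metric.ball p δ :=
    hR (by rw [Complex.mem_reProdIm]; constructor <;> simp [Set.right_mem_uIcc, Set.left_mem_uIcc])
  have cornerC : (w.re:ℂ) + w'.im*I ∈ Metric.ball p δ :=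
    hR (by rw [Complex.mem_reProdIm]; constructor <;> simp [Set.right_mem_uIcc, Set.left_mem_uIcc])
  -- integrability of segments
  have i1 : IntervalIntegrable (fun x : ℝ => f ((x:ℂ) + p.im*I)) MeasureTheory.volume p.re w.re :=
    integrable_horiz hcont (mem_ball_seg_horiz hpe cornerA)
  have i2 : IntervalIntegrable (fun x : ℝ => f ((x:ℂ) + p.im*I)) MeasureTheory.volume w.re w'.re :=
    integrable_horiz hcont (mem_ball_seg_horiz cornerA cornerB)
  have i3 : IntervalIntegrable (fun y : ℝ => f ((w.re:ℂ) + y*I)) MeasureTheory.volume p.im w.im :=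
    integrable_vert hcont (mem_ball_seg_vert cornerA hwe)
  have i4 : IntervalIntegrable (fun y : ℝ => f ((w.re:ℂ) + y*I)) MeasureTheory.volume w.im w'.im :=
    integrable_vert hcont (mem_ball_seg_vert hwe cornerC)
  have hsplit1 : (∫ x in p.re..w.re, f ((x:ℂ) + p.im*I)) + (∫ x in w.re..w'.re, f ((x:ℂ) + p.im*I))
      = ∫ x in p.re..w'.re, f ((x:ℂ) + p.im*I) :=
    intervalIntegral.integral_add_adjacent_intervals i1 i2
  have hsplit2 : (∫ y in p.im..w.im, f ((w.re:ℂ) + y*I)) + (∫ y in w.im..w'.im, f ((w.re:ℂ) + y*I))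
      = ∫ y in p.im..w'.im, f ((w.re:ℂ) + y*I) :=
    intervalIntegral.integral_add_adjacent_intervals i3 i4
  have hrect := Complex.integral_boundary_rect_eq_zero_of_differentiableOn f
    ((w.re:ℂ) + (p.im:ℂ)*I) w' (by
      apply hf.mono
      intro z hz
      apply hR
      simpa using hz)
  simp only [Complex.add_re, Complex.ofReal_re, Complex.mul_re, Complex.I_re, Complex.mul_im,
    Complex.I_im, Complex.ofReal_im, Complex.add_im] at hrect
  norm_num at hrect
  simp only [prim, smul_eq_mul] at *
  linear_combination -hsplit1 - I * hsplit2 + hrect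

lemma sq_le_of_abs_le {x y : ℝ} (h : |x| ≤ y) : x^2 ≤ y^2 := by
  nlinarith [abs_nonneg x, _root_.sq_abs x]

lemma sqrt_sq_add_sq_le (a b : ℝ) : Real.sqrt (a^2 + b^2) ≤ |a| + |b| := by
  rw [show |a| + |b| = Real.sqrt ((|a| + |b|)^2) by
    rw [Real.sqrt_sq (by positivity)]]
  apply Real.sqrt_le_sqrt
  nlinarith [_root_.sq_abs a, _root_.sq_abs b, abs_nonneg a, abs_nonneg b]

lemma abs_sub_le_of_uIcc {a b x : ℝ} (h : x ∈ Set.uIcc a b) : |x - a| ≤ |b - a| := by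
  rcases le_total a b with hab | hab
  · rw [Set.uIcc_of_le hab] at h
    rw [_root_.abs_of_nonneg (by linarith [h.1] : (0:ℝ) ≤ x - a),
      _root_.abs_of_nonneg (by linarith : (0:ℝ) ≤ b - a)]
    linarith [h.2]
  · rw [Set.uIcc_of_ge hab] at h
    rw [_root_.abs_of_nonpos (by linarith [h.2] : x - a ≤ 0),
      _root_.abs_of_nonpos (by linarith : b - a ≤ 0)]
    linarith [h.1]

lemma hasDerivAt_prim {f : ℂ → ℂ} {p : ℂ} {δ : ℝ}
    (hf : DifferentiableOn ℂ f (Metric.ball p δ)) {w : ℂ} (hw : w ∈ Metric.ball p δ) :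
    HasDerivAt (prim f p) (f w) w := by
  have hδ : 0 < δ := Metric.pos_of_mem_ball hw
  have hcont : ContinuousOn f (Metric.ball p δ) := hf.continuousOn
  rw [hasDerivAt_iff_isLittleO, Asymptotics.isLittleO_iff]
  intro c hc
  -- continuity of f at w
  have hfc : ContinuousAt f w :=
    (hf.differentiableAt (Metric.isOpen_ball.mem_nhds hw)).continuousAt
  obtain ⟨ε₁, hε₁pos, hε₁⟩ := Metric.continuousAt_iff.1 hfc (c/2) (by linarith)
  set ρ := dist w p with hρdef
  have hρδ : ρ < δ := hw
  have hρ0 : 0 ≤ ρ := dist_nonneg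
  set ε := min (ε₁/3) ((δ - ρ)/4) with hεdef
  have hεpos : 0 < ε := lt_min (by linarith) (by linarith)
  filter_upwards [Metric.ball_mem_nhds w hεpos] with w' hww'
  rw [Metric.mem_ball] at hww'
  -- basic coordinate bounds
  have habs : dist w' w = ‖w' - w‖ := Complex.dist_eq w' w
  have hre : |w'.re - w.re| ≤ dist w' w := by
    rw [habs]; simpa using Complex.abs_re_le_norm (w' - w)
  have him : |w'.im - w.im| ≤ dist w' w := by
    rw [habs]; simpa using Complex.abs_im_le_norm (w' - w)
  have hρsq : (w.re - p.re)^2 + (w.im - p.im)^2 = ρ^2 := by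
    rw [hρdef, Complex.dist_eq_re_im, Real.sq_sqrt (by positivity)]
  have hw' : w' ∈ Metric.ball p δ := by
    rw [Metric.mem_ball]
    calc dist w' p ≤ dist w' w + dist w p := dist_triangle _ _ _
    _ < ε + ρ := by linarith
    _ ≤ δ := by
      have : ε ≤ (δ - ρ)/4 := min_le_right _ _
      linarith
  -- the rectangle is inside the ball
  have hR : Set.uIcc w.re w'.re ×ℂ Set.uIcc p.im w'.im ⊆ Metric.ball p δ := by
    apply rect_subset_ball hδ
    have h1 : |w.re - p.re| ≤ ρ := by
      rw [abs_le]; constructor <;> nlinarith [sq_nonneg (w.im - p.im)]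
    have h2 : |w.im - p.im| ≤ ρ := by
      rw [abs_le]; constructor <;> nlinarith [sq_nonneg (w.re - p.re)]
    have h3 : |w'.re - p.re| ≤ ρ + ε := by
      calc |w'.re - p.re| ≤ |w'.re - w.re| + |w.re - p.re| := abs_sub_le _ _ _
      _ ≤ ρ + ε := by linarith
    have h4 : |w'.im - p.im| ≤ ρ + ε := by
      calc |w'.im - p.im| ≤ |w'.im - w.im| + |w.im - p.im| := abs_sub_le _ _ _
      _ ≤ ρ + ε := by linarith
    have hεle : ε ≤ (δ - ρ)/4 := min_le_right _ _
    have key : (ρ + ε)^2 < δ^2 := by nlinarith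
    have hδρsq : ρ^2 < δ^2 := by nlinarith
    have q1 : (w.re - p.re)^2 + (p.im - p.im)^2 < δ^2 := by
      nlinarith [sq_nonneg (w.im - p.im)]
    have q2 : (w.re - p.re)^2 + (w'.im - p.im)^2 < δ^2 := by
      have t : |w'.im - p.im| ≤ |w.im - p.im| + ε := by
        have := abs_sub_le w'.im w.im p.im
        linarith
      have t2 : (w'.im - p.im)^2 ≤ (|w.im - p.im| + ε)^2 := sq_le_of_abs_le t
      nlinarith [_root_.sq_abs (w.im - p.im),
        mul_le_mul_of_nonneg_right h2 hεpos.le, abs_nonneg (w.im - p.im)]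
    have q3 : (w'.re - p.re)^2 + (p.im - p.im)^2 < δ^2 := by
      have := sq_le_of_abs_le h3
      nlinarith
    have q4 : (w'.re - p.re)^2 + (w'.im - p.im)^2 < δ^2 := by
      have hlt : dist w' p < δ := hw'
      rw [Complex.dist_eq_re_im] at hlt
      exact (Real.sqrt_lt' hδ).mp hlt
    rcases max_cases ((w.re - p.re)^2) ((w'.re - p.re)^2) with ⟨hm, _⟩ | ⟨hm, _⟩ <;>
      rcases max_cases ((p.im - p.im)^2) ((w'.im - p.im)^2) with ⟨hm2, _⟩ | ⟨hm2, _⟩ <;>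
      rw [hm, hm2] <;> first | exact q1 | exact q2 | exact q3 | exact q4
  have cornerC : (w.re:ℂ) + w'.im*I ∈ Metric.ball p δ :=
    hR (by rw [Complex.mem_reProdIm]; constructor <;> simp [Set.right_mem_uIcc, Set.left_mem_uIcc])
  have hwe : (w.re:ℂ) + w.im*I ∈ Metric.ball p δ := by rwa [Complex.re_add_im]
  have hw'e : (w'.re:ℂ) + w'.im*I ∈ Metric.ball p δ := by rwa [Complex.re_add_im]
  have hdiff := prim_sub hf hw hw' hR
  -- integrability
  have itop : IntervalIntegrable (fun x : ℝ => f ((x:ℂ) + w'.im*I)) MeasureTheory.volume w.re w'.re :=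
    integrable_horiz hcont (mem_ball_seg_horiz cornerC hw'e)
  have ivert : IntervalIntegrable (fun y : ℝ => f ((w.re:ℂ) + y*I)) MeasureTheory.volume w.im w'.im :=
    integrable_vert hcont (mem_ball_seg_vert hwe cornerC)
  -- rewrite the constant term
  have hconst : (w' - w) • f w =
      (∫ _ in w.re..w'.re, f w) + I • ∫ _ in w.im..w'.im, f w := by
    rw [intervalIntegral.integral_const, intervalIntegral.integral_const]
    simp only [smul_eq_mul, Complex.real_smul]
    rw [show w' - w = ((w'.re - w.re : ℝ):ℂ) + ((w'.im - w.im : ℝ):ℂ)*I by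
      push_cast
      rw [show ((w'.re:ℂ) - w.re) + ((w'.im:ℂ) - w.im)*I
          = ((w'.re:ℂ) + w'.im*I) - ((w.re:ℂ) + w.im*I) by ring, Complex.re_add_im,
        Complex.re_add_im]]
    ring
  rw [hdiff, hconst]
  have hsub1 : (∫ x in w.re..w'.re, f ((x:ℂ) + w'.im*I)) - (∫ _ in w.re..w'.re, f w)
      = ∫ x in w.re..w'.re, (f ((x:ℂ) + w'.im*I) - f w) :=
    (intervalIntegral.integral_sub itop intervalIntegrable_const).symm
  have hsub2 : (∫ y in w.im..w'.im, f ((w.re:ℂ) + y*I)) - (∫ _ in w.im..w'.im, f w)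
      = ∫ y in w.im..w'.im, (f ((w.re:ℂ) + y*I) - f w) :=
    (intervalIntegral.integral_sub ivert intervalIntegrable_const).symm
  have hrw : (∫ x in w.re..w'.re, f ((x:ℂ) + w'.im*I)) + I • (∫ y in w.im..w'.im, f ((w.re:ℂ) + y*I))
      - ((∫ _ in w.re..w'.re, f w) + I • ∫ _ in w.im..w'.im, f w)
      = (∫ x in w.re..w'.re, (f ((x:ℂ) + w'.im*I) - f w))
        + I • (∫ y in w.im..w'.im, (f ((w.re:ℂ) + y*I) - f w)) := by
    rw [← hsub1, ← hsub2]
    simp only [smul_eq_mul]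
    ring
  rw [hrw]
  -- now estimate
  have best1 : ∀ x ∈ Set.uIoc w.re w'.re, ‖f ((x:ℂ) + w'.im*I) - f w‖ ≤ c/2 := by
    intro x hx
    have hxm : x ∈ Set.uIcc w.re w'.re := Set.uIoc_subset_uIcc hx
    have hd : dist ((x:ℂ) + w'.im*I) w < ε₁ := by
      rw [Complex.dist_eq_re_im]
      simp only [Complex.add_re, Complex.ofReal_re, Complex.mul_re, Complex.I_re, Complex.I_im,
        Complex.ofReal_im, Complex.add_im, Complex.mul_im]
      norm_num
      calc Real.sqrt ((x - w.re)^2 + (w'.im - w.im)^2) ≤ |x - w.re| + |w'.im - w.im| :=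
            sqrt_sq_add_sq_le _ _
      _ ≤ |w'.re - w.re| + |w'.im - w.im| := by linarith [abs_sub_le_of_uIcc hxm]
      _ ≤ 2 * dist w' w := by linarith
      _ < 2 * ε := by linarith
      _ ≤ ε₁ := by
        have : ε ≤ ε₁/3 := min_le_left _ _
        linarith
    have := hε₁ hd
    rw [dist_eq_norm] at this
    linarith
  have best2 : ∀ y ∈ Set.uIoc w.im w'.im, ‖f ((w.re:ℂ) + y*I) - f w‖ ≤ c/2 := by
    intro y hy
    have hym : y ∈ Set.uIcc w.im w'.im := Set.uIoc_subset_uIcc hy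
    have hd : dist ((w.re:ℂ) + y*I) w < ε₁ := by
      rw [Complex.dist_eq_re_im]
      simp only [Complex.add_re, Complex.ofReal_re, Complex.mul_re, Complex.I_re, Complex.I_im,
        Complex.ofReal_im, Complex.add_im, Complex.mul_im]
      norm_num
      calc Real.sqrt ((y - w.im)^2) ≤ |y - w.im| + |0| := by
            simpa using sqrt_sq_add_sq_le (y - w.im) 0
      _ ≤ |w'.im - w.im| + 0 := by
            simp only [abs_zero, add_zero]
            linarith [abs_sub_le_of_uIcc hym]
      _ ≤ 2 * dist w' w := by linarith [dist_nonneg (x := w') (y := w)]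
      _ < 2 * ε := by linarith
      _ ≤ ε₁ := by
        have : ε ≤ ε₁/3 := min_le_left _ _
        linarith
    have := hε₁ hd
    rw [dist_eq_norm] at this
    linarith
  have e1 : ‖∫ x in w.re..w'.re, (f ((x:ℂ) + w'.im*I) - f w)‖ ≤ c/2 * |w'.re - w.re| :=
    intervalIntegral.norm_integral_le_of_norm_le_const best1
  have e2 : ‖∫ y in w.im..w'.im, (f ((w.re:ℂ) + y*I) - f w)‖ ≤ c/2 * |w'.im - w.im| :=
    intervalIntegral.norm_integral_le_of_norm_le_const best2
  calc ‖(∫ x in w.re..w'.re, (f ((x:ℂ) + w'.im*I) - f w))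
      + I • (∫ y in w.im..w'.im, (f ((w.re:ℂ) + y*I) - f w))‖
      ≤ ‖∫ x in w.re..w'.re, (f ((x:ℂ) + w'.im*I) - f w)‖
        + ‖I • (∫ y in w.im..w'.im, (f ((w.re:ℂ) + y*I) - f w))‖ := norm_add_le _ _
  _ ≤ c/2 * |w'.re - w.re| + c/2 * |w'.im - w.im| := by
      rw [norm_smul, Complex.norm_I, one_mul]
      linarith
  _ ≤ c * ‖w' - w‖ := by
      have h1 : |w'.re - w.re| ≤ ‖w' - w‖ := by simpa using Complex.abs_re_le_norm (w' - w)
      have h2 : |w'.im - w.im| ≤ ‖w' - w‖ := by simpa using Complex.abs_im_le_norm (w' - w)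
      nlinarith


lemma const_of_two_prims {f F G : ℂ → ℂ} {U : Set ℂ} (hU : Convex ℝ U) (hUo : IsOpen U)
    (hF : ∀ z ∈ U, HasDerivAt F (f z) z) (hG : ∀ z ∈ U, HasDerivAt G (f z) z)
    {x y : ℂ} (hx : x ∈ U) (hy : y ∈ U) : F x - G x = F y - G y := by
  refine hU.is_const_of_fderivWithin_eq_zero (𝕜 := ℂ) (f := fun z => F z - G z)
    (fun z hz => ((hF z hz).sub (hG z hz)).differentiableAt.differentiableWithinAt)
    (fun z hz => ?_) hx hy
  rw [fderivWithin_eq_fderiv (f := fun z => F z - G z) (hUo.uniqueDiffOn z hz)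
    ((hF z hz).sub (hG z hz)).differentiableAt]
  have h0 : HasDerivAt (fun w => F w - G w) 0 z := by
    have := (hF z hz).sub (hG z hz); simp only [sub_self] at this; exact this
  rw [h0.hasFDerivAt.fderiv]
  ext w
  simp

lemma loop_integral_zero {f : ℂ → ℂ} {s : Set ℂ} (hs : IsOpen s) (hf : DifferentiableOn ℂ f s)
    {γ : ℝ → ℂ} (hγ : ContDiff ℝ 1 γ)
    {K : ℝ × ℝ → ℂ} (hK : Continuous K) (hKs : ∀ q, K q ∈ s)
    (hK0 : ∀ t ∈ Set.Icc (0:ℝ) 1, K (0, t) = γ t)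
    (hK1 : ∀ t ∈ Set.Icc (0:ℝ) 1, K (1, t) = K (0, 0))
    (hKa : ∀ a ∈ Set.Icc (0:ℝ) 1, K (a, 0) = K (0, 0))
    (hKb : ∀ a ∈ Set.Icc (0:ℝ) 1, K (a, 1) = K (0, 0)) :
    ∫ t in (0:ℝ)..1, f (γ t) * deriv γ t = 0 := by
  classical
  set Q : Set (ℝ × ℝ) := Set.Icc (0:ℝ) 1 ×ˢ Set.Icc (0:ℝ) 1 with hQdef
  have hQc : IsCompact Q := isCompact_Icc.prod isCompact_Icc
  set S := K '' Q with hSdef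
  have hSc : IsCompact S := hQc.image hK
  have hSs : S ⊆ s := by rintro _ ⟨q, _, rfl⟩; exact hKs q
  obtain ⟨d, hd, hds⟩ := hSc.exists_thickening_subset_open hs hSs
  set r := d/2 with hrdef
  have hr : 0 < r := by positivity
  have hball : ∀ p ∈ S, Metric.ball p (2*r) ⊆ s := by
    intro p hp z hz
    apply hds
    rw [Metric.mem_thickening_iff]
    exact ⟨p, hp, by rw [Metric.mem_ball] at hz; calc dist z p < 2*r := hz
                     _ = d := by rw [hrdef]; ring_nf⟩
  have hprim : ∀ p ∈ S, ∀ w ∈ Metric.ball p (2*r), HasDerivAt (prim f p) (f w) w :=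
    fun p hp w hw => hasDerivAt_prim (hf.mono (hball p hp)) hw
  -- uniform continuity & grid size
  have hucK := hQc.uniformContinuousOn_of_continuous hK.continuousOn
  rw [Metric.uniformContinuousOn_iff] at hucK
  obtain ⟨δ₀, hδ₀, hδK⟩ := hucK (r/2) (by positivity)
  obtain ⟨n, hn⟩ := exists_nat_one_div_lt hδ₀
  set N := n + 1 with hNdef
  have hNpos : 0 < (N:ℝ) := by positivity
  have hN1 : 1/(N:ℝ) < δ₀ := by
    rw [hNdef]
    push_cast
    exact hn
  set T : ℕ → ℝ := fun j => (j:ℝ) / N with hTdef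
  have hT0 : T 0 = 0 := by simp [hTdef]
  have hTN : T N = 1 := by rw [hTdef]; field_simp
  have hTle : ∀ j, T j ≤ T (j+1) := by
    intro j
    simp only [hTdef]
    gcongr
    push_cast
    linarith
  have hTnn : ∀ j, 0 ≤ T j := fun j => by positivity
  have hTle1 : ∀ j ≤ N, T j ≤ 1 := by
    intro j hj
    simp only [hTdef]
    rw [div_le_one hNpos]
    exact_mod_cast hj
  have hT01 : ∀ j ≤ N, T j ∈ Set.Icc (0:ℝ) 1 := fun j hj => ⟨hTnn j, hTle1 j hj⟩
  have hTstep : ∀ j, T (j+1) - T j = 1/N := by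
    intro j
    simp only [hTdef]
    push_cast
    ring
  set z : ℕ → ℕ → ℂ := fun i j => K (T i, T j) with hzdef
  have hzS : ∀ i ≤ N, ∀ j ≤ N, z i j ∈ S := by
    intro i hi j hj
    exact ⟨(T i, T j), Set.mk_mem_prod (hT01 i hi) (hT01 j hj), rfl⟩
  have hgrid : ∀ (p q : ℝ × ℝ), p ∈ Q → q ∈ Q → |p.1 - q.1| ≤ 1/N → |p.2 - q.2| ≤ 1/N →
      dist (K p) (K q) < r/2 := by
    intro p q hp hq h1 h2
    apply hδK p hp q hq
    rw [Prod.dist_eq]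
    apply max_lt <;> rw [Real.dist_eq] <;> [exact lt_of_le_of_lt h1 hN1; exact lt_of_le_of_lt h2 hN1]
  set A : ℕ → ℂ := fun i => ∑ j ∈ Finset.range N,
    (prim f (z i j) (z i (j+1)) - prim f (z i j) (z i j)) with hAdef
  -- x, the base point
  have hx0 : K (0,0) = γ 0 := hK0 0 (by norm_num)
  -- Claim 1 : the integral equals A 0
  have claim1 : ∫ t in (0:ℝ)..1, f (γ t) * deriv γ t = A 0 := by
    have hmemIcc : ∀ j < N, ∀ t ∈ Set.uIcc (T j) (T (j+1)), t ∈ Set.Icc (0:ℝ) 1 := by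
      intro j hj t ht
      rw [Set.uIcc_of_le (hTle j)] at ht
      exact ⟨le_trans (hTnn j) ht.1, le_trans ht.2 (hTle1 (j+1) (by omega))⟩
    have hint : ∀ j < N, IntervalIntegrable (fun t => f (γ t) * deriv γ t)
        MeasureTheory.volume (T j) (T (j+1)) := by
      intro j hj
      apply ContinuousOn.intervalIntegrable
      apply ContinuousOn.mul
      · apply hf.continuousOn.comp (hγ.continuous.continuousOn)
        intro t ht
        rw [← hK0 t (hmemIcc j hj t ht)]
        exact hKs _
      · exact (hγ.continuous_deriv le_rfl).continuousOn
    have hsplit : ∑ j ∈ Finset.range N, (∫ t in (T j)..(T (j+1)), f (γ t) * deriv γ t)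
        = ∫ t in (T 0)..(T N), f (γ t) * deriv γ t :=
      intervalIntegral.sum_integral_adjacent_intervals (fun j hj => hint j hj)
    rw [hT0, hTN] at hsplit
    rw [← hsplit, hAdef]
    apply Finset.sum_congr rfl
    intro j hj
    rw [Finset.mem_range] at hj
    -- each sub-integral via FTC
    have hmemball : ∀ t ∈ Set.uIcc (T j) (T (j+1)), γ t ∈ Metric.ball (z 0 j) (2*r) := by
      intro t ht
      have htI := hmemIcc j hj t ht
      rw [← hK0 t htI]
      rw [Metric.mem_ball]
      calc dist (K (0, t)) (K (T 0, T j)) < r/2 := by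
            apply hgrid _ _ (Set.mk_mem_prod (by norm_num) htI)
              (Set.mk_mem_prod (hT01 0 (by omega)) (hT01 j (by omega)))
            · simp only [hT0, sub_self, abs_zero]
              positivity
            · simp only
              rw [Set.uIcc_of_le (hTle j)] at ht
              rw [abs_le]
              constructor
              · linarith [ht.1, ht.2, hTstep j]
              · linarith [ht.1, ht.2, hTstep j]
      _ ≤ 2*r := by linarith
      _ = 2*r := rfl
    have hft : ∀ t ∈ Set.uIcc (T j) (T (j+1)),
        HasDerivAt (prim f (z 0 j) ∘ γ) (f (γ t) * deriv γ t) t := by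
      intro t ht
      have h1 : HasDerivAt (prim f (z 0 j)) (f (γ t)) (γ t) :=
        hprim (z 0 j) (hzS 0 (by omega) j (by omega)) (γ t) (hmemball t ht)
      have h2 : HasDerivAt γ (deriv γ t) t := (hγ.differentiable one_ne_zero t).hasDerivAt
      exact h1.comp t h2
    rw [intervalIntegral.integral_eq_sub_of_hasDerivAt hft (hint j hj)]
    have e1 : z 0 (j+1) = γ (T (j+1)) := by
      simp only [hzdef, hT0]
      exact hK0 _ (hT01 _ (by omega))
    have e0 : z 0 j = γ (T j) := by
      simp only [hzdef, hT0]
      exact hK0 _ (hT01 _ (by omega))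
    rw [e1, e0]
    rfl
  -- Claim 3 : A N = 0
  have claim3 : A N = 0 := by
    rw [hAdef]
    apply Finset.sum_eq_zero
    intro j hj
    rw [Finset.mem_range] at hj
    have ezj : z N j = K (0,0) := by
      simp only [hzdef, hTN]
      exact hK1 _ (hT01 _ (by omega))
    have ezj1 : z N (j+1) = K (0,0) := by
      simp only [hzdef, hTN]
      exact hK1 _ (hT01 _ (by omega))
    rw [ezj, ezj1, sub_self]
  -- Claim 2 : A i = A (i+1)
  have claim2 : ∀ i < N, A i = A (i+1) := by
    intro i hi
    set a : ℕ → ℂ := fun j => z i j with hadef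
    set b : ℕ → ℂ := fun j => z (i+1) j with hbdef
    have haS : ∀ j ≤ N, a j ∈ S := fun j hj => hzS i (by omega) j hj
    have hbS : ∀ j ≤ N, b j ∈ S := fun j hj => hzS (i+1) (by omega) j hj
    have hstepT : ∀ j ≤ N, ∀ j' ≤ N, j' = j + 1 ∨ j = j' → |T j - T j'| ≤ 1/N := by
      intro j hj j' hj' hor
      rcases hor with h | h
      · subst h
        rw [abs_le]
        constructor <;> linarith [hTstep j, hTle j]
      · subst h
        simp only [sub_self, abs_zero]
        positivity
    have hQmem : ∀ j ≤ N, ∀ i' ≤ N, (T i', T j) ∈ Q := fun j hj i' hi' =>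
      Set.mk_mem_prod (hT01 i' hi') (hT01 j hj)
    -- distances
    have hd_aa : ∀ j < N, dist (a j) (a (j+1)) < r/2 := by
      intro j hj
      apply hgrid _ _ (hQmem j (by omega) i (by omega)) (hQmem (j+1) (by omega) i (by omega))
      · simp only [sub_self, abs_zero]; positivity
      · exact hstepT j (by omega) (j+1) (by omega) (Or.inl rfl)
    have hd_ab : ∀ j ≤ N, dist (a j) (b j) < r/2 := by
      intro j hj
      apply hgrid _ _ (hQmem j (by omega) i (by omega)) (hQmem j (by omega) (i+1) (by omega))
      · exact hstepT i (by omega) (i+1) (by omega) (Or.inl rfl)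
      · simp only [sub_self, abs_zero]; positivity
    -- the "connection" value
    set e : ℕ → ℂ := fun j => prim f (a j) (a j) - prim f (a j) (b j) with hedef
    have e0 : e 0 = 0 := by
      have ha0 : a 0 = K (0,0) := by
        simp only [hadef, hzdef, hT0]
        exact hKa _ (hT01 i (by omega))
      have hb0 : b 0 = K (0,0) := by
        simp only [hbdef, hzdef, hT0]
        exact hKa _ (hT01 (i+1) (by omega))
      simp only [hedef, ha0, hb0, sub_self]
    have eN : e N = 0 := by
      have haN : a N = K (0,0) := by
        simp only [hadef, hzdef, hTN]
        exact hKb _ (hT01 i (by omega))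
      have hbN : b N = K (0,0) := by
        simp only [hbdef, hzdef, hTN]
        exact hKb _ (hT01 (i+1) (by omega))
      simp only [hedef, haN, hbN, sub_self]
    have key : ∀ j < N,
        (prim f (a j) (a (j+1)) - prim f (a j) (a j))
          - (prim f (b j) (b (j+1)) - prim f (b j) (b j)) = e (j+1) - e j := by
      intro j hj
      -- E1 : on U := ball (a j) r
      have hprimU1 : ∀ w ∈ Metric.ball (a j) r, HasDerivAt (prim f (a j)) (f w) w := by
        intro w hw
        apply hprim (a j) (haS j (by omega)) w
        rw [Metric.mem_ball] at hw ⊢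
        linarith
      have hprimU2 : ∀ w ∈ Metric.ball (a j) r, HasDerivAt (prim f (b j)) (f w) w := by
        intro w hw
        apply hprim (b j) (hbS j (by omega)) w
        rw [Metric.mem_ball] at hw ⊢
        calc dist w (b j) ≤ dist w (a j) + dist (a j) (b j) := dist_triangle _ _ _
        _ < r + r/2 := by have := hd_ab j (by omega); linarith
        _ ≤ 2*r := by linarith
      have hmem_bj : b j ∈ Metric.ball (a j) r := by
        rw [Metric.mem_ball]
        have := hd_ab j (by omega)
        rw [dist_comm]
        linarith
      have hmem_bj1 : b (j+1) ∈ Metric.ball (a j) r := by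
        rw [Metric.mem_ball]
        calc dist (b (j+1)) (a j) ≤ dist (b (j+1)) (a (j+1)) + dist (a (j+1)) (a j) :=
              dist_triangle _ _ _
        _ < r/2 + r/2 := by
              have h1 := hd_ab (j+1) (by omega)
              have h2 := hd_aa j hj
              rw [dist_comm] at h1 h2
              exact add_lt_add h1 h2
        _ = r := by ring
      have E1 := const_of_two_prims (convex_ball _ _) Metric.isOpen_ball
        hprimU1 hprimU2 hmem_bj1 hmem_bj
      -- E2 : on W := ball (a j) r ∩ ball (a (j+1)) r
      have hprimW1 : ∀ w ∈ Metric.ball (a j) r ∩ Metric.ball (a (j+1)) r,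
          HasDerivAt (prim f (a j)) (f w) w := fun w hw => hprimU1 w hw.1
      have hprimW2 : ∀ w ∈ Metric.ball (a j) r ∩ Metric.ball (a (j+1)) r,
          HasDerivAt (prim f (a (j+1))) (f w) w := by
        intro w hw
        apply hprim (a (j+1)) (haS (j+1) (by omega)) w
        rw [Metric.mem_ball]
        have := hw.2
        rw [Metric.mem_ball] at this
        linarith
      have hmem_aj1 : a (j+1) ∈ Metric.ball (a j) r ∩ Metric.ball (a (j+1)) r := by
        constructor
        · rw [Metric.mem_ball, dist_comm]
          have := hd_aa j hj
          linarith
        · exact Metric.mem_ball_self hr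
      have hmem_bj1' : b (j+1) ∈ Metric.ball (a j) r ∩ Metric.ball (a (j+1)) r := by
        constructor
        · exact hmem_bj1
        · rw [Metric.mem_ball, dist_comm]
          have := hd_ab (j+1) (by omega)
          linarith
      have E2 := const_of_two_prims ((convex_ball _ _).inter (convex_ball _ _))
        (Metric.isOpen_ball.inter Metric.isOpen_ball)
        hprimW1 hprimW2 hmem_aj1 hmem_bj1'
      simp only [hedef]
      linear_combination E1 + E2
    have hsum : A i - A (i+1) = ∑ j ∈ Finset.range N, (e (j+1) - e j) := by
      rw [hAdef]
      simp only
      rw [← Finset.sum_sub_distrib]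
      apply Finset.sum_congr rfl
      intro j hj
      rw [Finset.mem_range] at hj
      simpa only [hadef, hbdef] using key j hj
    rw [Finset.sum_range_sub (f := e), e0, eN, sub_zero] at hsum
    exact sub_eq_zero.mp hsum
  -- conclude
  have hall : ∀ m, m ≤ N → A 0 = A m := by
    intro m
    induction m with
    | zero => intro _; rfl
    | succ k ih =>
      intro hk
      rw [ih (by omega), claim2 k (by omega)]
  rw [claim1, hall N le_rfl, claim3]



end CauchyGoursatAux

set_option maxHeartbeats 1000000 in
/-- Cauchy–Goursat theorem for strict harmonic even forms: if `w = u + v·dxdy`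
satisfies the Cauchy–Riemann equations on a simply connected open set `Ω` (with
`u, v` continuously differentiable), then the valuation of `w` on every closed `C¹`
curve in `Ω` vanishes. -/
theorem cauchy_goursat_strict_harmonic
    (Ω : Set (ℝ × ℝ)) (hΩ : IsOpen Ω) (hsc : SimplyConnectedSpace Ω)
    (u v : ℝ × ℝ → ℝ) (hu : ContDiffOn ℝ 1 u Ω) (hv : ContDiffOn ℝ 1 v Ω)
    (hCR : ∀ p ∈ Ω, px u p = py v p ∧ py u p = -px v p) :
    ∀ c : ℝ → ℝ × ℝ, ContDiff ℝ 1 c → (∀ t ∈ Set.Icc (0:ℝ) 1, c t ∈ Ω) →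
      c 0 = c 1 → valuation u v c = 0 := by
  intro c hc hmem hclosed
  set f : ℂ → ℂ := fun w : ℂ => (u (w.re, w.im) : ℂ) + v (w.re, w.im) * I with hfdef
  set γ : ℝ → ℂ := fun t => ((c t).1 : ℂ) + ((c t).2 : ℂ) * I with hγdef
  set s : Set ℂ := (fun z : ℂ => (z.re, z.im)) ⁻¹' Ω with hsdef
  have hso : IsOpen s := hΩ.preimage (continuous_re.prodMk continuous_im)
  have hfd : DifferentiableOn ℂ f s := fun z hz =>
    (CR_holo hΩ hu hv hCR hz).differentiableAt.differentiableWithinAt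
  -- derivative of γ
  have hγder : ∀ t, HasDerivAt γ (((deriv c t).1 : ℂ) + ((deriv c t).2 : ℂ) * I) t := by
    intro t
    have hc' : HasDerivAt c (deriv c t) t := (hc.differentiable one_ne_zero t).hasDerivAt
    have h1 : HasDerivAt (fun t => (c t).1) (deriv c t).1 t := by
      exact (ContinuousLinearMap.fst ℝ ℝ ℝ).hasFDerivAt.comp_hasDerivAt t hc'
    have h2 : HasDerivAt (fun t => (c t).2) (deriv c t).2 t := by
      exact (ContinuousLinearMap.snd ℝ ℝ ℝ).hasFDerivAt.comp_hasDerivAt t hc'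
    exact (h1.ofReal_comp).add ((h2.ofReal_comp).mul_const I)
  have hγC : ContDiff ℝ 1 γ := by
    apply ContDiff.add
    · exact ofRealCLM.contDiff.comp (contDiff_fst.comp hc)
    · exact (ofRealCLM.contDiff.comp (contDiff_snd.comp hc)).mul contDiff_const
  -- the homotopy
  haveI := hsc
  set x0 : Ω := ⟨c 0, hmem 0 (by norm_num)⟩ with hx0def
  set γpath : Path x0 x0 :=
    { toFun := fun t => ⟨c t, hmem t t.2⟩
      continuous_toFun := by
        apply Continuous.subtype_mk
        exact hc.continuous.comp continuous_subtype_val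
      source' := Subtype.ext (by norm_num [hx0def])
      target' := Subtype.ext (by norm_num [← hclosed, hx0def]) } with hγpathdef
  set H := (SimplyConnectedSpace.paths_homotopic γpath (Path.refl x0)).some with hHdef
  set φ : Ω → ℂ := fun w => ((w : ℝ × ℝ).1 : ℂ) + ((w : ℝ × ℝ).2 : ℂ) * I with hφdef
  have hφc : Continuous φ := by
    apply Continuous.add
    · exact continuous_ofReal.comp (continuous_fst.comp continuous_subtype_val)
    · exact (continuous_ofReal.comp (continuous_snd.comp continuous_subtype_val)).mul
        continuous_const
  set pr : ℝ → unitInterval := fun a => Set.projIcc 0 1 zero_le_one a with hprdef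
  set K : ℝ × ℝ → ℂ := fun q => φ (H (pr q.1, pr q.2)) with hKdef
  have hK : Continuous K := by
    apply hφc.comp
    apply H.continuous.comp
    exact (continuous_projIcc.comp continuous_fst).prodMk (continuous_projIcc.comp continuous_snd)
  have hKs : ∀ q, K q ∈ s := by
    intro q
    have hmemΩ := (H (pr q.1, pr q.2)).2
    simp only [hKdef, hsdef, Set.mem_preimage, hφdef]
    simpa using hmemΩ
  have hpr0 : pr 0 = 0 := Subtype.ext (by simp [hprdef])
  have hpr1 : pr 1 = 1 := Subtype.ext (by simp [hprdef])
  have hprt : ∀ (t : ℝ) (ht : t ∈ Set.Icc (0:ℝ) 1), pr t = ⟨t, ht⟩ := by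
    intro t ht
    simp only [hprdef]
    exact Set.projIcc_of_mem _ ht
  have hγpath_apply : ∀ ti : unitInterval, φ (γpath ti) = γ ti := fun ti => rfl
  have hK0 : ∀ t ∈ Set.Icc (0:ℝ) 1, K (0, t) = γ t := by
    intro t ht
    simp only [hKdef]
    rw [hpr0, hprt t ht]

    rw [show H (0, (⟨t, ht⟩ : unitInterval)) = γpath ⟨t, ht⟩ from H.apply_zero _]
    rfl
  have hbase : K (0, 0) = φ x0 := by
    simp only [hKdef]
    rw [hpr0]
    rw [show H (0, (0 : unitInterval)) = γpath 0 from H.apply_zero _]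
    rw [γpath.source]
  have hK1 : ∀ t ∈ Set.Icc (0:ℝ) 1, K (1, t) = K (0, 0) := by
    intro t ht
    rw [hbase]
    simp only [hKdef]
    rw [hpr1]
    rw [show H (1, pr t) = (Path.refl x0) (pr t) from H.apply_one _]
    rfl
  have hKa : ∀ a ∈ Set.Icc (0:ℝ) 1, K (a, 0) = K (0, 0) := by
    intro a ha
    rw [hbase]
    simp only [hKdef]
    rw [hpr0]
    rw [show H (pr a, 0) = γpath 0 from H.eq_fst _ (by norm_num)]
    rw [γpath.source]
  have hKb : ∀ a ∈ Set.Icc (0:ℝ) 1, K (a, 1) = K (0, 0) := by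
    intro a ha
    rw [hbase]
    simp only [hKdef]
    rw [hpr1]
    rw [show H (pr a, 1) = γpath 1 from H.eq_fst _ (by norm_num)]
    rw [γpath.target]
  have hzero := loop_integral_zero hso hfd hγC hK hKs hK0 hK1 hKa hKb
  -- identify the valuation with the contour integral
  set g1 : ℝ → ℝ := fun t => u (c t) * (deriv c t).1 - v (c t) * (deriv c t).2 with hg1def
  set g2 : ℝ → ℝ := fun t => u (c t) * (deriv c t).2 + v (c t) * (deriv c t).1 with hg2def
  have hfg : ∀ t, f (γ t) * deriv γ t = ((g1 t : ℝ) : ℂ) + ((g2 t : ℝ) : ℂ) * I := by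
    intro t
    rw [(hγder t).deriv]
    have hre : (γ t).re = (c t).1 := by simp [hγdef]
    have him : (γ t).im = (c t).2 := by simp [hγdef]
    simp only [hfdef, hre, him, hg1def, hg2def]
    push_cast
    linear_combination ((v (c t) : ℂ) * ((deriv c t).2 : ℂ)) * Complex.I_sq
  -- integrability of the pieces
  have huIcc : Set.uIcc (0:ℝ) 1 = Set.Icc (0:ℝ) 1 := Set.uIcc_of_le zero_le_one
  have hdc : Continuous (deriv c) := hc.continuous_deriv le_rfl
  have hucont : ContinuousOn (fun t => u (c t)) (Set.uIcc (0:ℝ) 1) := by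
    apply hu.continuousOn.comp hc.continuous.continuousOn
    intro t ht
    rw [huIcc] at ht
    exact hmem t ht
  have hvcont : ContinuousOn (fun t => v (c t)) (Set.uIcc (0:ℝ) 1) := by
    apply hv.continuousOn.comp hc.continuous.continuousOn
    intro t ht
    rw [huIcc] at ht
    exact hmem t ht
  have hg1c : ContinuousOn g1 (Set.uIcc (0:ℝ) 1) := by
    apply ContinuousOn.sub
    · exact hucont.mul (continuous_fst.comp hdc).continuousOn
    · exact hvcont.mul (continuous_snd.comp hdc).continuousOn
  have hg2c : ContinuousOn g2 (Set.uIcc (0:ℝ) 1) := by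
    apply ContinuousOn.add
    · exact hucont.mul (continuous_snd.comp hdc).continuousOn
    · exact hvcont.mul (continuous_fst.comp hdc).continuousOn
  have hi1 : IntervalIntegrable (fun t => ((g1 t : ℝ) : ℂ)) MeasureTheory.volume 0 1 :=
    (continuous_ofReal.comp_continuousOn hg1c).intervalIntegrable
  have hi2 : IntervalIntegrable (fun t => ((g2 t : ℝ) : ℂ) * I) MeasureTheory.volume 0 1 :=
    ((continuous_ofReal.comp_continuousOn hg2c).mul continuousOn_const).intervalIntegrable
  have hkey : (((∫ t in (0:ℝ)..1, g1 t) : ℝ) : ℂ) + (((∫ t in (0:ℝ)..1, g2 t) : ℝ) : ℂ) * I = 0 := by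
    rw [← intervalIntegral.integral_ofReal, ← intervalIntegral.integral_ofReal,
      ← intervalIntegral.integral_mul_const, ← intervalIntegral.integral_add hi1 hi2]
    rw [← hzero]
    apply intervalIntegral.integral_congr
    intro t _
    exact (hfg t).symm
  rw [valuation]
  exact hkey
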